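/- Let T = [[A, B],[C, −A*]] be a nonnegative diagonally dominant Hamiltonian on H × H with iℝ ⊆ ρ(A). Then every point of the imaginary axis is a point of regular type for T: for each t ∈ ℝ there is c > 0 with ‖(T − it)x‖ ≥ c‖x‖ for all x ∈ D(T) = D(A) × D(A*). -/

import Mathlib

/-- `Rz` is a (bounded, everywhere defined) resolvent operator for `S` at `z`. -/
def HasRes {V : Type*} [NormedAddCommGroup V] [NormedSpace ℂ V]
    (S : V →ₗ.[ℂ] V) (z : ℂ) (Rz : V →L[ℂ] V) : Prop :=
  (∀ y : V, ∃ h : Rz y ∈ S.domain, S ⟨Rz y, h⟩ - z • Rz y = y) ∧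
  (∀ x : S.domain, Rz (S x - z • (x : V)) = (x : V))

open scoped ComplexConjugate

lemma pmap_cauchy_schwarz {H : Type*} [NormedAddCommGroup H] [InnerProductSpace ℂ H]
    (B : H →ₗ.[ℂ] H)
    (hBsym : ∀ x y : B.domain, (inner ℂ (B x) ((y : H)) : ℂ) = inner ℂ ((x : H)) (B y))
    (hBpos : ∀ x : B.domain, 0 ≤ ((inner ℂ (B x) ((x : H)) : ℂ)).re)
    (x y : B.domain) :
    ‖(inner ℂ (B x) ((y : H)) : ℂ)‖ ≤
      Real.sqrt ((inner ℂ (B x) ((x : H)) : ℂ)).re *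
        Real.sqrt ((inner ℂ (B y) ((y : H)) : ℂ)).re := by
  set m : ℂ := inner ℂ (B x) ((y : H)) with hm
  set sxx : ℂ := inner ℂ (B x) ((x : H)) with hsxx
  set syy : ℂ := inner ℂ (B y) ((y : H)) with hsyy
  by_cases hm0 : m = 0
  · rw [hm0]; simp only [norm_zero]
    positivity
  have hμ : ((‖m‖ : ℂ)) ≠ 0 := by simpa using hm0
  have hsyx : (inner ℂ (B y) ((x : H)) : ℂ) = conj m := by
    rw [hm, hBsym x y, ← inner_conj_symm]
  have hmc : m * conj m = ((‖m‖ : ℂ)) ^ 2 := Complex.mul_conj' m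
  have key : ∀ r : ℝ, 0 ≤ sxx.re * (r * r) + (2 * ‖m‖) * r + syy.re := by
    intro r
    set α : ℂ := (r : ℂ) * m / (‖m‖ : ℂ) with hα
    have hw := hBpos (α • x + y)
    have hBw : B (α • x + y) = α • B x + B y := by
      rw [B.map_add, B.map_smul]
    have hcoe : ((α • x + y : B.domain) : H) = α • (x : H) + (y : H) := by
      simp
    have expand : (inner ℂ (B (α • x + y)) ((α • x + y : B.domain) : H) : ℂ)
        = conj α * α * sxx + conj α * m + α * conj m + syy := by
      rw [hBw, hcoe]
      simp only [inner_add_left, inner_add_right, inner_smul_left, inner_smul_right,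
        ← hm, ← hsxx, ← hsyy, hsyx]
      ring
    have hconjα : conj α = (r : ℂ) * conj m / (‖m‖ : ℂ) := by
      rw [hα]
      simp [map_div₀, Complex.conj_ofReal]
    have h2 : conj α * m = (r : ℂ) * (‖m‖ : ℂ) := by
      rw [hconjα, div_mul_eq_mul_div, div_eq_iff hμ]
      linear_combination (r : ℂ) * hmc
    have h3 : α * conj m = (r : ℂ) * (‖m‖ : ℂ) := by
      rw [hα, div_mul_eq_mul_div, div_eq_iff hμ]
      linear_combination (r : ℂ) * hmc
    have h1 : conj α * α = (r : ℂ) * (r : ℂ) := by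
      rw [hconjα, hα, div_mul_div_comm, div_eq_iff (mul_ne_zero hμ hμ)]
      linear_combination (r : ℂ) * (r : ℂ) * hmc
    have expand2 : (inner ℂ (B (α • x + y)) ((α • x + y : B.domain) : H) : ℂ)
        = ((r * r : ℝ) : ℂ) * sxx + ((2 * ‖m‖ * r : ℝ) : ℂ) + syy := by
      rw [expand, h1, h2, h3]
      push_cast
      ring
    have hre : (((r * r : ℝ) : ℂ) * sxx + ((2 * ‖m‖ * r : ℝ) : ℂ) + syy).re
        = sxx.re * (r * r) + (2 * ‖m‖) * r + syy.re := by
      simp only [Complex.add_re, Complex.re_ofReal_mul, Complex.ofReal_re]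
      ring
    rw [expand2, hre] at hw
    exact hw
  have hd := discrim_le_zero key
  rw [discrim] at hd
  have hsq : ‖m‖ ^ 2 ≤ sxx.re * syy.re := by nlinarith [norm_nonneg m]
  calc ‖m‖ = Real.sqrt (‖m‖ ^ 2) := (Real.sqrt_sq (norm_nonneg m)).symm
    _ ≤ Real.sqrt (sxx.re * syy.re) := Real.sqrt_le_sqrt hsq
    _ = Real.sqrt sxx.re * Real.sqrt syy.re := Real.sqrt_mul (hBpos x) _

lemma pmap_comp_clm {H : Type*} [NormedAddCommGroup H] [InnerProductSpace ℂ H] [CompleteSpace H]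
    (B : H →ₗ.[ℂ] H)
    (hBsym : ∀ x y : B.domain, (inner ℂ (B x) ((y : H)) : ℂ) = inner ℂ ((x : H)) (B y))
    (W : H →L[ℂ] H) (hW : ∀ y : H, W y ∈ B.domain)
    (hker : ∀ e : H, (∀ d : H, (inner ℂ e (W d) : ℂ) = 0) → e = 0) :
    ∃ L : H →L[ℂ] H, ∀ y, L y = B ⟨W y, hW y⟩ := by
  let L0 : H →ₗ[ℂ] H :=
  { toFun := fun y => B ⟨W y, hW y⟩
    map_add' := fun a b => by
      have h : (⟨W (a + b), hW _⟩ : B.domain) = ⟨W a, hW _⟩ + ⟨W b, hW _⟩ := by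
        apply Subtype.ext; simp
      simp only [h, B.map_add]
    map_smul' := fun cα a => by
      have h : (⟨W (cα • a), hW _⟩ : B.domain) = cα • (⟨W a, hW _⟩ : B.domain) := by
        apply Subtype.ext; simp
      simp only [h, B.map_smul, RingHom.id_apply] }
  have hL0 : ∀ y, L0 y = B ⟨W y, hW y⟩ := fun _ => rfl
  have hcont : Continuous L0 := by
    apply L0.continuous_of_seq_closed_graph
    intro s x y hs hLs
    have hlim : ∀ d : H, (inner ℂ y (W d) : ℂ) = inner ℂ (L0 x) (W d) := by
      intro d
      have h1 : Filter.Tendsto (fun n => (inner ℂ (L0 (s n)) (W d) : ℂ))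
          Filter.atTop (nhds (inner ℂ y (W d))) := hLs.inner tendsto_const_nhds
      have h2 : (fun n => (inner ℂ (L0 (s n)) (W d) : ℂ))
          = fun n => (inner ℂ (W (s n)) ((B ⟨W d, hW d⟩ : H)) : ℂ) := by
        funext n
        exact hBsym ⟨W (s n), hW _⟩ ⟨W d, hW _⟩
      have h3 : Filter.Tendsto (fun n => (inner ℂ (W (s n)) ((B ⟨W d, hW d⟩ : H)) : ℂ))
          Filter.atTop (nhds (inner ℂ (W x) ((B ⟨W d, hW d⟩ : H)))) :=
        (((W.continuous.tendsto x).comp hs)).inner tendsto_const_nhds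
      rw [h2] at h1
      have h4 := tendsto_nhds_unique h1 h3
      rw [h4]
      exact (hBsym ⟨W x, hW _⟩ ⟨W d, hW _⟩).symm
    have h5 : L0 x - y = 0 := by
      apply hker
      intro d
      rw [inner_sub_left, hlim d, sub_self]
    exact (sub_eq_zero.mp h5).symm
  exact ⟨{ toLinearMap := L0, cont := hcont }, fun y => rfl⟩

lemma amgm_sqrt (d x y : ℝ) (hx : 0 ≤ x) (hy : 0 ≤ y) :
    d * (Real.sqrt x * Real.sqrt y) ≤ (d ^ 2 * x + y) / 2 := by
  nlinarith [sq_nonneg (d * Real.sqrt x - Real.sqrt y), Real.sq_sqrt hx, Real.sq_sqrt hy,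
    Real.sqrt_nonneg x, Real.sqrt_nonneg y]

lemma cre_le_norm (w : ℂ) : w.re ≤ ‖w‖ := by
  exact Complex.re_le_norm w

set_option maxHeartbeats 1000000 in
/-- for a nonnegative diagonally dominant Hamiltonian
`T = [[A,B],[C,−A*]]` with `iℝ ⊆ ρ(A)`, every point of the imaginary axis is a point
of regular type of `T`: `‖(T − it)x‖ ≥ c‖x‖` on `D(T) = D(A) × D(A*)`. -/
theorem hamiltonian_regular_type_on_imaginary_axis
    {H : Type*} [NormedAddCommGroup H] [InnerProductSpace ℂ H] [CompleteSpace H]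
    (A : H →ₗ.[ℂ] H) (hdense : Dense (A.domain : Set H))
    (hclosed : IsClosed (A.graph : Set (H × H)))
    (hresA : ∀ t : ℝ, ∃ Rz : H →L[ℂ] H, HasRes A ((t : ℂ) * Complex.I) Rz)
    (B C : H →ₗ.[ℂ] H)
    (hB : A.adjoint.domain ≤ B.domain) (hC : A.domain ≤ C.domain)
    -- B, C symmetric
    (hBsym : ∀ x y : B.domain, (inner ℂ (B x) ((y : H)) : ℂ) = inner ℂ ((x : H)) (B y))
    (hCsym : ∀ x y : C.domain, (inner ℂ (C x) ((y : H)) : ℂ) = inner ℂ ((x : H)) (C y))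
    -- B, C nonnegative
    (hBpos : ∀ x : B.domain, 0 ≤ ((inner ℂ (B x) ((x : H)) : ℂ)).re)
    (hCpos : ∀ x : C.domain, 0 ≤ ((inner ℂ (C x) ((x : H)) : ℂ)).re) :
    ∀ t : ℝ, ∃ c > (0 : ℝ), ∀ u : A.domain, ∀ v : A.adjoint.domain,
      c * Real.sqrt (‖(u : H)‖ ^ 2 + ‖(v : H)‖ ^ 2) ≤
        Real.sqrt
          (‖A u + B ⟨(v : H), hB v.2⟩ - ((t : ℂ) * Complex.I) • (u : H)‖ ^ 2 +
           ‖C ⟨(u : H), hC u.2⟩ - A.adjoint v - ((t : ℂ) * Complex.I) • (v : H)‖ ^ 2) := by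
  intro t
  obtain ⟨R, hR⟩ := hresA t
  set z : ℂ := (t : ℂ) * Complex.I with hzdef
  have hzconj : (starRingEnd ℂ) z = -z := by
    simp [hzdef, Complex.ext_iff]
  have hzre : z.re = 0 := by simp [hzdef]
  -- basic resolvent facts
  have hmemR : ∀ y : H, R y ∈ A.domain := fun y => (hR.1 y).choose
  have hRy : ∀ y : H, A ⟨R y, hmemR y⟩ - z • R y = y := fun y => (hR.1 y).choose_spec
  have hRinj0 : ∀ e : H, R e = 0 → e = 0 := by
    intro e he
    have h0 : (⟨R e, hmemR e⟩ : A.domain) = 0 := Subtype.ext he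
    have := hRy e
    rw [h0, he] at this
    simpa using this.symm
  set R' : H →L[ℂ] H := ContinuousLinearMap.adjoint R with hR'def
  have hadj : A.adjoint.IsFormalAdjoint A := LinearPMap.adjoint_isFormalAdjoint hdense
  -- R maps A x - z x back to x, so R (A x) = x + z • R x
  have hRA : ∀ x : A.domain, R (A x) = (x : H) + z • R (x : H) := by
    intro x
    have h := hR.2 x
    rw [map_sub, map_smul] at h
    exact sub_eq_iff_eq_add.mp h
  -- membership of R' y in adjoint domain
  have hmemadj : ∀ y : H, R' y ∈ A.adjoint.domain := by
    intro y
    apply LinearPMap.mem_adjoint_domain_of_exists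
    refine ⟨y + (starRingEnd ℂ z) • R' y, fun x => ?_⟩
    have hr : (inner ℂ (R' y) (A x) : ℂ) = inner ℂ y ((x : H) + z • R (x : H)) := by
      rw [ContinuousLinearMap.adjoint_inner_left, hRA x]
    rw [hr, inner_add_left, inner_smul_left, inner_add_right, inner_smul_right,
      ContinuousLinearMap.adjoint_inner_left]
    simp
  -- R' inverts A† + z
  have hR'inv : ∀ v : A.adjoint.domain, R' (A.adjoint v + z • (v : H)) = (v : H) := by
    intro v
    have key : ∀ y : H, (inner ℂ (R' (A.adjoint v + z • (v : H)) - (v : H)) y : ℂ) = 0 := by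
      intro y
      set x : A.domain := ⟨R y, hmemR y⟩ with hx
      have hy : A x - z • R y = y := hRy y
      have e1 : (inner ℂ (R' (A.adjoint v + z • (v : H))) y : ℂ)
          = inner ℂ (A.adjoint v + z • (v : H)) (R y) :=
        ContinuousLinearMap.adjoint_inner_left R y _
      have e2 : (inner ℂ (A.adjoint v) (R y) : ℂ) = inner ℂ ((v : H)) (A x) := hadj v x
      have e3 : (inner ℂ ((v : H)) y : ℂ)
          = inner ℂ ((v : H)) (A x) - z * inner ℂ ((v : H)) (R y) := by
        conv_lhs => rw [← hy]
        rw [inner_sub_right, inner_smul_right]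
      rw [inner_sub_left, e1, inner_add_left, inner_smul_left, e2, e3, hzconj]
      ring
    have := key (R' (A.adjoint v + z • (v : H)) - (v : H))
    rw [inner_self_eq_zero] at this
    exact sub_eq_zero.mp this
  -- the bounded operators L_B = B ∘ R' and L_C = C ∘ R
  obtain ⟨LB, hLB⟩ := pmap_comp_clm B hBsym R' (fun y => hB (hmemadj y)) (by
    intro e he
    apply hRinj0
    have : ∀ d : H, (inner ℂ (R e) d : ℂ) = 0 := by
      intro d
      rw [← ContinuousLinearMap.adjoint_inner_right]
      exact he d
    have h := this (R e)
    rwa [inner_self_eq_zero] at h)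
  obtain ⟨LC, hLC⟩ := pmap_comp_clm C hCsym R (fun y => hC (hmemR y)) (by
    intro e he
    have heq : (fun w => (inner ℂ e w : ℂ)) = fun _ => (0 : ℂ) := by
      apply Continuous.ext_on hdense
      · exact continuous_const.inner continuous_id
      · exact continuous_const
      · intro w hw
        have hw' : w ∈ A.domain := hw
        have : R (A ⟨w, hw'⟩ - z • w) = w := hR.2 ⟨w, hw'⟩
        rw [← this]
        exact he _
    have := congrFun heq e
    rwa [inner_self_eq_zero] at this)
  -- constants
  set M : ℝ := ‖R‖ + ‖R'‖ with hMdef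
  have hM0 : 0 ≤ M := by positivity
  have hMR : ∀ w : H, ‖R w‖ ≤ M * ‖w‖ := by
    intro w
    have h := R.le_opNorm w
    have := norm_nonneg R'
    have := norm_nonneg w
    nlinarith
  have hMR' : ∀ w : H, ‖R' w‖ ≤ M * ‖w‖ := by
    intro w
    have h := R'.le_opNorm w
    have := norm_nonneg R
    have := norm_nonneg w
    nlinarith
  set KB : ℝ := ‖LB‖ with hKBdef
  set KC : ℝ := ‖LC‖ with hKCdef
  have hKB0 : 0 ≤ KB := norm_nonneg _
  have hKC0 : 0 ≤ KC := norm_nonneg _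
  set D : ℝ := Real.sqrt (KB * M) + Real.sqrt (KC * M) with hDdef
  have hD0 : 0 ≤ D := by positivity
  set E : ℝ := 4 * M + D ^ 2 with hEdef
  have hE0 : 0 ≤ E := by positivity
  refine ⟨1 / (E + 1), by positivity, ?_⟩
  intro u v
  set vB : B.domain := ⟨(v : H), hB v.2⟩ with hvBdef
  set uC : C.domain := ⟨(u : H), hC u.2⟩ with huCdef
  set f : H := A u + B vB - z • (u : H) with hfdef
  set g : H := C uC - A.adjoint v - z • (v : H) with hgdef
  set nu : ℝ := ‖(u : H)‖ with hnudef
  set nv : ℝ := ‖(v : H)‖ with hnvdef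
  have hnu0 : 0 ≤ nu := norm_nonneg _
  have hnv0 : 0 ≤ nv := norm_nonneg _
  set F : ℝ := Real.sqrt (‖f‖ ^ 2 + ‖g‖ ^ 2) with hFdef
  have hF0 : 0 ≤ F := Real.sqrt_nonneg _
  have hfF : ‖f‖ ≤ F := by
    have h1 := Real.sqrt_le_sqrt (show ‖f‖ ^ 2 ≤ ‖f‖ ^ 2 + ‖g‖ ^ 2 by nlinarith [sq_nonneg ‖g‖])
    rwa [Real.sqrt_sq (norm_nonneg f)] at h1
  have hgF : ‖g‖ ≤ F := by
    have h1 := Real.sqrt_le_sqrt (show ‖g‖ ^ 2 ≤ ‖f‖ ^ 2 + ‖g‖ ^ 2 by nlinarith [sq_nonneg ‖f‖])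
    rwa [Real.sqrt_sq (norm_nonneg g)] at h1
  set bb : ℝ := ((inner ℂ (B vB) ((v : H)) : ℂ)).re with hbbdef
  set cc : ℝ := ((inner ℂ (C uC) ((u : H)) : ℂ)).re with hccdef
  have hbb0 : 0 ≤ bb := hBpos vB
  have hcc0 : 0 ≤ cc := hCpos uC
  -- Step 1: dissipativity estimate
  have key1 : bb + cc ≤ ‖f‖ * nv + ‖g‖ * nu := by
    have e1 : (inner ℂ f ((v : H)) : ℂ)
        = conj (inner ℂ ((v : H)) (A u)) + inner ℂ (B vB) ((v : H))
          + z * inner ℂ ((u : H)) ((v : H)) := by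
      rw [hfdef, inner_sub_left, inner_add_left, inner_smul_left, hzconj, inner_conj_symm]
      ring
    have e2 : (inner ℂ g ((u : H)) : ℂ)
        = inner ℂ (C uC) ((u : H)) - inner ℂ ((v : H)) (A u)
          + z * inner ℂ ((v : H)) ((u : H)) := by
      rw [hgdef, inner_sub_left, inner_sub_left, inner_smul_left, hzconj, hadj v u]
      ring
    have e3 : ((inner ℂ f ((v : H)) : ℂ) + inner ℂ g ((u : H))).re = bb + cc := by
      rw [e1, e2, show (inner ℂ ((v : H)) ((u : H)) : ℂ)
          = conj (inner ℂ ((u : H)) ((v : H))) from (inner_conj_symm _ _).symm]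
      simp only [Complex.add_re, Complex.sub_re, Complex.conj_re, Complex.conj_im,
        Complex.mul_re, hzre]
      rw [hbbdef, hccdef]
      ring
    have e4 : bb + cc ≤ ‖(inner ℂ f ((v : H)) : ℂ) + inner ℂ g ((u : H))‖ := by
      rw [← e3]
      exact cre_le_norm _
    refine e4.trans ((norm_add_le _ _).trans (add_le_add ?_ ?_))
    · exact norm_inner_le_norm _ _
    · exact norm_inner_le_norm _ _
  -- Step 2: estimate for nu
  have hu : (u : H) = R f - R (B vB) := by
    have h1 : f - B vB = A u - z • (u : H) := by rw [hfdef]; abel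
    have h2 := hR.2 u
    rw [← h1, map_sub] at h2
    exact h2.symm
  set uB : B.domain := ⟨R' (u : H), hB (hmemadj (u : H))⟩ with huBdef
  have hBuB : ((inner ℂ (B uB) ((uB : H)) : ℂ)).re ≤ KB * M * (nu * nu) := by
    have l1 : ((inner ℂ (B uB) ((uB : H)) : ℂ)).re ≤ ‖(inner ℂ (B uB) ((uB : H)) : ℂ)‖ := by
      exact cre_le_norm _
    have l2 : ‖(inner ℂ (B uB) ((uB : H)) : ℂ)‖ ≤ ‖(B uB : H)‖ * ‖((uB : H))‖ :=
      norm_inner_le_norm _ _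
    have l3 : (B uB : H) = LB (u : H) := (hLB (u : H)).symm
    have l4 : ‖LB (u : H)‖ ≤ KB * nu := LB.le_opNorm _
    have l5 : ‖((uB : H))‖ ≤ M * nu := hMR' (u : H)
    have l6 : 0 ≤ ‖((uB : H))‖ := norm_nonneg _
    have l7 : ‖LB (u : H)‖ * ‖((uB : H))‖ ≤ (KB * nu) * (M * nu) :=
      mul_le_mul l4 l5 l6 (by positivity)
    calc ((inner ℂ (B uB) ((uB : H)) : ℂ)).re ≤ ‖(B uB : H)‖ * ‖((uB : H))‖ := l1.trans l2
      _ = ‖LB (u : H)‖ * ‖((uB : H))‖ := by rw [l3]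
      _ ≤ (KB * nu) * (M * nu) := l7
      _ = KB * M * (nu * nu) := by ring
  have key2 : nu ≤ M * ‖f‖ + Real.sqrt (KB * M) * Real.sqrt bb := by
    have i0 : (inner ℂ ((u : H)) ((u : H)) : ℂ).re = nu * nu := by
      rw [inner_self_eq_norm_sq_to_K (𝕜 := ℂ)]
      push_cast
      simp [pow_two, hnudef]
    have i1 : (inner ℂ ((u : H)) ((u : H)) : ℂ)
        = inner ℂ ((u : H)) (R f) - inner ℂ ((u : H)) (R (B vB)) := by
      nth_rewrite 2 [hu]
      rw [inner_sub_right]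
    have t1 : ‖(inner ℂ ((u : H)) (R f) : ℂ)‖ ≤ nu * (M * ‖f‖) := by
      refine (norm_inner_le_norm _ _).trans ?_
      exact mul_le_mul_of_nonneg_left (hMR f) hnu0
    have t2 : (inner ℂ ((u : H)) (R (B vB)) : ℂ) = inner ℂ (R' (u : H)) ((B vB : H)) :=
      (ContinuousLinearMap.adjoint_inner_left R (B vB) ((u : H))).symm
    have t4 : ‖(inner ℂ (B vB) ((uB : H)) : ℂ)‖
        ≤ Real.sqrt ((inner ℂ (B vB) ((vB : H)) : ℂ)).re
          * Real.sqrt ((inner ℂ (B uB) ((uB : H)) : ℂ)).re :=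
      pmap_cauchy_schwarz B hBsym hBpos vB uB
    have t4' : ‖(inner ℂ (R' (u : H)) ((B vB : H)) : ℂ)‖
        ≤ Real.sqrt bb * Real.sqrt ((inner ℂ (B uB) ((uB : H)) : ℂ)).re := by
      rw [norm_inner_symm]
      exact t4
    have t5 : Real.sqrt ((inner ℂ (B uB) ((uB : H)) : ℂ)).re ≤ Real.sqrt (KB * M) * nu := by
      have h6 := Real.sqrt_le_sqrt hBuB
      rwa [show Real.sqrt (KB * M * (nu * nu)) = Real.sqrt (KB * M) * nu from by
        rw [Real.sqrt_mul (by positivity), Real.sqrt_mul_self hnu0]] at h6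
    have m1 : nu * nu ≤ (M * ‖f‖ + Real.sqrt (KB * M) * Real.sqrt bb) * nu := by
      have r1 : (inner ℂ ((u : H)) ((u : H)) : ℂ).re
          ≤ ‖(inner ℂ ((u : H)) (R f) : ℂ)‖ + ‖(inner ℂ ((u : H)) (R (B vB)) : ℂ)‖ := by
        rw [i1]
        exact (cre_le_norm _).trans (norm_sub_le _ _)
      rw [i0] at r1
      rw [t2] at r1
      have r2 := t4'.trans (mul_le_mul_of_nonneg_left t5 (Real.sqrt_nonneg bb))
      nlinarith [Real.sqrt_nonneg bb, Real.sqrt_nonneg (KB * M)]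
    rcases eq_or_lt_of_le hnu0 with h | h
    · rw [← h]
      positivity
    · exact le_of_mul_le_mul_right m1 h
  -- Step 3: estimate for nv
  have hv : (v : H) = R' (C uC) - R' g := by
    have h1 : C uC - g = A.adjoint v + z • (v : H) := by rw [hgdef]; abel
    have h2 := hR'inv v
    rw [← h1, map_sub] at h2
    exact h2.symm
  set vC : C.domain := ⟨R (v : H), hC (hmemR (v : H))⟩ with hvCdef
  have hCvC : ((inner ℂ (C vC) ((vC : H)) : ℂ)).re ≤ KC * M * (nv * nv) := by
    have l1 : ((inner ℂ (C vC) ((vC : H)) : ℂ)).re ≤ ‖(inner ℂ (C vC) ((vC : H)) : ℂ)‖ := by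
      exact cre_le_norm _
    have l2 : ‖(inner ℂ (C vC) ((vC : H)) : ℂ)‖ ≤ ‖(C vC : H)‖ * ‖((vC : H))‖ :=
      norm_inner_le_norm _ _
    have l3 : (C vC : H) = LC (v : H) := (hLC (v : H)).symm
    have l4 : ‖LC (v : H)‖ ≤ KC * nv := LC.le_opNorm _
    have l5 : ‖((vC : H))‖ ≤ M * nv := hMR (v : H)
    have l6 : 0 ≤ ‖((vC : H))‖ := norm_nonneg _
    have l7 : ‖LC (v : H)‖ * ‖((vC : H))‖ ≤ (KC * nv) * (M * nv) :=
      mul_le_mul l4 l5 l6 (by positivity)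
    calc ((inner ℂ (C vC) ((vC : H)) : ℂ)).re ≤ ‖(C vC : H)‖ * ‖((vC : H))‖ := l1.trans l2
      _ = ‖LC (v : H)‖ * ‖((vC : H))‖ := by rw [l3]
      _ ≤ (KC * nv) * (M * nv) := l7
      _ = KC * M * (nv * nv) := by ring
  have key3 : nv ≤ M * ‖g‖ + Real.sqrt (KC * M) * Real.sqrt cc := by
    have i0 : (inner ℂ ((v : H)) ((v : H)) : ℂ).re = nv * nv := by
      rw [inner_self_eq_norm_sq_to_K (𝕜 := ℂ)]
      push_cast
      simp [pow_two, hnvdef]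
    have i1 : (inner ℂ ((v : H)) ((v : H)) : ℂ)
        = inner ℂ ((v : H)) (R' (C uC)) - inner ℂ ((v : H)) (R' g) := by
      nth_rewrite 2 [hv]
      rw [inner_sub_right]
    have t1 : ‖(inner ℂ ((v : H)) (R' g) : ℂ)‖ ≤ nv * (M * ‖g‖) := by
      refine (norm_inner_le_norm _ _).trans ?_
      exact mul_le_mul_of_nonneg_left (hMR' g) hnv0
    have t2 : (inner ℂ ((v : H)) (R' (C uC)) : ℂ) = inner ℂ (R (v : H)) ((C uC : H)) :=
      ContinuousLinearMap.adjoint_inner_right R ((v : H)) (C uC)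
    have t4 : ‖(inner ℂ (C uC) ((vC : H)) : ℂ)‖
        ≤ Real.sqrt ((inner ℂ (C uC) ((uC : H)) : ℂ)).re
          * Real.sqrt ((inner ℂ (C vC) ((vC : H)) : ℂ)).re :=
      pmap_cauchy_schwarz C hCsym hCpos uC vC
    have t4' : ‖(inner ℂ (R (v : H)) ((C uC : H)) : ℂ)‖
        ≤ Real.sqrt cc * Real.sqrt ((inner ℂ (C vC) ((vC : H)) : ℂ)).re := by
      rw [norm_inner_symm]
      exact t4
    have t5 : Real.sqrt ((inner ℂ (C vC) ((vC : H)) : ℂ)).re ≤ Real.sqrt (KC * M) * nv := by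
      have h6 := Real.sqrt_le_sqrt hCvC
      rwa [show Real.sqrt (KC * M * (nv * nv)) = Real.sqrt (KC * M) * nv from by
        rw [Real.sqrt_mul (by positivity), Real.sqrt_mul_self hnv0]] at h6
    have m1 : nv * nv ≤ (M * ‖g‖ + Real.sqrt (KC * M) * Real.sqrt cc) * nv := by
      have r1 : (inner ℂ ((v : H)) ((v : H)) : ℂ).re
          ≤ ‖(inner ℂ ((v : H)) (R' (C uC)) : ℂ)‖ + ‖(inner ℂ ((v : H)) (R' g) : ℂ)‖ := by
        rw [i1]
        exact (cre_le_norm _).trans (norm_sub_le _ _)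
      rw [i0] at r1
      rw [t2] at r1
      have r2 := t4'.trans (mul_le_mul_of_nonneg_left t5 (Real.sqrt_nonneg cc))
      nlinarith [Real.sqrt_nonneg cc, Real.sqrt_nonneg (KC * M)]
    rcases eq_or_lt_of_le hnv0 with h | h
    · rw [← h]
      positivity
    · exact le_of_mul_le_mul_right m1 h
  -- Step 4 and 5: combine
  set S : ℝ := nu + nv with hSdef
  clear_value S F bb cc nu nv f g uB vC vB uC D E M KB KC
  have hS0 : 0 ≤ S := by rw [hSdef]; exact add_nonneg hnu0 hnv0
  have pf1 : ‖f‖ * nv ≤ F * nv := mul_le_mul_of_nonneg_right hfF hnv0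
  have pf2 : ‖g‖ * nu ≤ F * nu := mul_le_mul_of_nonneg_right hgF hnu0
  have pfS : F * nv + F * nu = F * S := by rw [hSdef]; ring
  have key4b : bb ≤ F * S := by linarith
  have key4c : cc ≤ F * S := by linarith
  have key5 : S ≤ E * F := by
    have s1 : Real.sqrt bb ≤ Real.sqrt (F * S) := Real.sqrt_le_sqrt key4b
    have s2 : Real.sqrt cc ≤ Real.sqrt (F * S) := Real.sqrt_le_sqrt key4c
    have am : D * Real.sqrt (F * S) ≤ (D ^ 2 * F + S) / 2 := by
      rw [Real.sqrt_mul hF0]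
      exact amgm_sqrt D F S hF0 hS0
    have b1 : Real.sqrt (KB * M) * Real.sqrt bb ≤ Real.sqrt (KB * M) * Real.sqrt (F * S) :=
      mul_le_mul_of_nonneg_left s1 (Real.sqrt_nonneg _)
    have b2 : Real.sqrt (KC * M) * Real.sqrt cc ≤ Real.sqrt (KC * M) * Real.sqrt (F * S) :=
      mul_le_mul_of_nonneg_left s2 (Real.sqrt_nonneg _)
    have b3 : M * ‖f‖ ≤ M * F := mul_le_mul_of_nonneg_left hfF hM0
    have b4 : M * ‖g‖ ≤ M * F := mul_le_mul_of_nonneg_left hgF hM0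
    have bd : D * Real.sqrt (F * S)
        = Real.sqrt (KB * M) * Real.sqrt (F * S) + Real.sqrt (KC * M) * Real.sqrt (F * S) := by
      rw [hDdef]; ring
    have hEexp : E * F = 4 * (M * F) + D ^ 2 * F := by rw [hEdef]; ring
    have hSexp : S = nu + nv := hSdef
    linarith
  have hNS : Real.sqrt (nu ^ 2 + nv ^ 2) ≤ S := by
    have h0 : nu ^ 2 + nv ^ 2 ≤ S ^ 2 := by
      have h2 := mul_nonneg hnu0 hnv0
      rw [hSdef]
      calc nu ^ 2 + nv ^ 2 ≤ nu ^ 2 + nv ^ 2 + 2 * (nu * nv) := by linarith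
        _ = (nu + nv) ^ 2 := by ring
    have h1 : Real.sqrt (nu ^ 2 + nv ^ 2) ≤ Real.sqrt (S ^ 2) := Real.sqrt_le_sqrt h0
    rwa [Real.sqrt_sq hS0] at h1
  have hE1 : (0:ℝ) < E + 1 := by linarith
  have hEF : S ≤ (E + 1) * F := by
    have h2 : (E + 1) * F = E * F + F := by ring
    linarith
  calc 1 / (E + 1) * Real.sqrt (nu ^ 2 + nv ^ 2)
      ≤ 1 / (E + 1) * ((E + 1) * F) := by
        apply mul_le_mul_of_nonneg_left (hNS.trans hEF)
        positivity
    _ = F := by field_simp
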